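/- Let σ be a permutation of [n] = {1,…,n}, and define B_σ(k) = |{1 ≤ q ≤ k : σ(q) ≤ σ(k)}| and A_σ = {B_σ(k) : k ∈ [n]}. Then every interval of real numbers of length √(32·n·D(σ)) that is contained in [1, n] contains an element of A_σ, where D(σ) is the discrepancy of σ regarded as a permutation of Z_n via the identification of [n] with Z_n. -/
import Mathlib


open Finset

/-- An interval of `ZMod n`: the projection of a set of consecutive integers. -/
def IsInterval {n : ℕ} (I : Finset (ZMod n)) : Prop :=
  ∃ a len : ℕ, I = (Finset.range len).image (fun i : ℕ => ((a + i : ℕ) : ZMod n))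

/-- An initial interval of `ZMod n`: the projection of `{0, 1, …, M}` for some `M ≥ 0`. -/
def IsInitialInterval {n : ℕ} (I : Finset (ZMod n)) : Prop :=
  ∃ M : ℕ, I = (Finset.range (M + 1)).image (fun i : ℕ => ((i : ℕ) : ZMod n))

/-- The discrepancy of `S` in `T`: `| |S ∩ T| - |S||T|/n |`. -/
noncomputable def discIn {n : ℕ} (S T : Finset (ZMod n)) : ℝ :=
  |((S ∩ T).card : ℝ) - (S.card : ℝ) * (T.card : ℝ) / (n : ℝ)|

/-- The discrepancy `D(σ)` of a permutation of `ZMod n`: the max of `D_J(σ(I))`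
over all intervals `I`, `J` of `ZMod n`. -/
noncomputable def disc {n : ℕ} (σ : Equiv.Perm (ZMod n)) : ℝ :=
  sSup {d : ℝ | ∃ I J : Finset (ZMod n), IsInterval I ∧ IsInterval J ∧ d = discIn (I.image σ) J}

/-- The discrepancy `D*(σ)`: the max of `D_J(σ(I))` over all initial intervals `I`, `J`. -/
noncomputable def discStar {n : ℕ} (σ : Equiv.Perm (ZMod n)) : ℝ :=
  sSup {d : ℝ | ∃ I J : Finset (ZMod n),
    IsInitialInterval I ∧ IsInitialInterval J ∧ d = discIn (I.image σ) J}

/-- `e(x) = exp(2πix)`. -/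
noncomputable def e (x : ℝ) : ℂ := Complex.exp (2 * Real.pi * Complex.I * x)

/-- The multiplication permutation `ψ_k : s ↦ k·s` of `ZMod n`, for a unit `k`. -/
def psi {n : ℕ} (k : (ZMod n)ˣ) : Equiv.Perm (ZMod n) where
  toFun s := (k : ZMod n) * s
  invFun s := ((k⁻¹ : (ZMod n)ˣ) : ZMod n) * s
  left_inv s := Units.inv_mul_cancel_left k s
  right_inv s := Units.mul_inv_cancel_left k s

/-- The Sós permutation value: `β_α(t) = |{s ∈ [n] : {αs} ≤ {αt}}|`. -/
noncomputable def sos (α : ℝ) (n t : ℕ) : ℕ :=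
  (@Finset.filter ℕ (fun s => Int.fract (α * s) ≤ Int.fract (α * t))
    (Classical.decPred _) (Finset.Icc 1 n)).card

/-- `A_s(α) = { {αx} : x ∈ [s] }`. -/
noncomputable def fracSet (α : ℝ) (s : ℕ) : Finset ℝ :=
  (Finset.Icc 1 s).image (fun x : ℕ => Int.fract (α * x))

/-- `d*(A) = sup_{0 ≤ x ≤ 1} | |A ∩ [0,x]| - x|A| |` for a finite set `A` of reals. -/
noncomputable def dstarSet (A : Finset ℝ) : ℝ :=
  ⨆ x : Set.Icc (0 : ℝ) 1,
    |(((@Finset.filter ℝ (fun a => a ∈ Set.Icc (0 : ℝ) (x : ℝ))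
        (Classical.decPred _) A).card : ℝ)) - (x : ℝ) * (A.card : ℝ)|

/-- Iterated Gauss map: `gaussIter α 0 = α`, `gaussIter α (i+1) = 1/{gaussIter α i}`.
For irrational `α`, the partial quotients of the continued fraction `α = [a₀; a₁, a₂, …]`
are given by `aᵢ = ⌊gaussIter α i⌋`. -/
noncomputable def gaussIter (α : ℝ) : ℕ → ℝ
  | 0 => α
  | n + 1 => 1 / Int.fract (gaussIter α n)

/-- Auxiliary for continuants (operating on the reversed list):
`contRev [] = 1`, `contRev [a] = a`, `contRev (a :: b :: l) = a * contRev (b :: l) + contRev l`. -/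
def contRev : List ℕ → ℕ
  | [] => 1
  | [a] => a
  | a :: b :: l => a * contRev (b :: l) + contRev l

/-- The continuant `K(a₁,…,a_m)`: `K() = 1`, `K(a₁) = a₁`,
`K(a₁,…,a_j) = a_j·K(a₁,…,a_{j−1}) + K(a₁,…,a_{j−2})`. -/
def continuant (l : List ℕ) : ℕ := contRev l.reverse

/-- `B_σ(k) = |{1 ≤ q ≤ k : σ(q) ≤ σ(k)}|` for a permutation `σ` of `[n]`
(realized as `Fin n`, zero-indexed). -/
def Bperm (n : ℕ) (σ : Equiv.Perm (Fin n)) (k : Fin n) : ℕ :=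
  (Finset.univ.filter (fun q : Fin n => q ≤ k ∧ σ q ≤ σ k)).card

/-- `B_α(k) = |{1 ≤ q ≤ k : {qα} ≤ {kα}}|`. -/
noncomputable def Bfrac (α : ℝ) (k : ℕ) : ℕ :=
  (@Finset.filter ℕ (fun q => Int.fract (α * q) ≤ Int.fract (α * k))
    (Classical.decPred _) (Finset.Icc 1 k)).card

/-- Every real interval of length `√(32·n·D(σ))` contained in `[1, n]` contains an element
of `A_σ = {B_σ(k) : k ∈ [n]}`.  Here `σ` is a permutation of `[n]` (realized, zero-indexed,
as a permutation of `Fin n`), and `σZ` is `σ` regarded as a permutation of `ZMod n` via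
the identification `t ↦ t mod n` of `[n] = {1,…,n}` with `ZMod n`. -/
lemma my_cast_nat_inj {n : ℕ} (hn : 1 ≤ n) {x y : ℕ} (hx1 : 1 ≤ x) (hxn : x ≤ n)
    (hy1 : 1 ≤ y) (hyn : y ≤ n) (h : (x : ZMod n) = y) : x = y := by
  have h2 : x % n = y % n := (ZMod.natCast_eq_natCast_iff x y n).mp h
  have e1 : x % n = if x = n then 0 else x := by
    rcases eq_or_lt_of_le hxn with h | h
    · simp [h]
    · rw [Nat.mod_eq_of_lt h, if_neg (by omega)]
  have e2 : y % n = if y = n then 0 else y := by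
    rcases eq_or_lt_of_le hyn with h | h
    · simp [h]
    · rw [Nat.mod_eq_of_lt h, if_neg (by omega)]
  rw [e1, e2] at h2
  split_ifs at h2 <;> omega

def ivl (n a len : ℕ) : Finset (ZMod n) :=
  (Finset.range len).image (fun i : ℕ => ((a + i : ℕ) : ZMod n))

lemma my_ivl_isInterval {n : ℕ} (a len : ℕ) : IsInterval (ivl n a len) := ⟨a, len, rfl⟩

lemma my_mem_ivl {n : ℕ} (hn : 1 ≤ n) {a s p : ℕ} (has : a + s ≤ n) (hp1 : 1 ≤ p) (hpn : p ≤ n) :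
    ((p : ZMod n) ∈ ivl n (a+1) s) ↔ (a + 1 ≤ p ∧ p ≤ a + s) := by
  constructor
  · rintro h
    simp only [ivl, Finset.mem_image, Finset.mem_range] at h
    obtain ⟨i, hi, hip⟩ := h
    have := my_cast_nat_inj hn (by omega) (by omega) hp1 hpn hip
    omega
  · rintro ⟨h1, h2⟩
    simp only [ivl, Finset.mem_image, Finset.mem_range]
    exact ⟨p - (a+1), by omega, by congr 1; omega⟩

lemma my_card_ivl {n : ℕ} (hn : 1 ≤ n) {a s : ℕ} (has : a + s ≤ n) :
    (ivl n (a+1) s).card = s := by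
  rw [ivl, Finset.card_image_of_injOn, Finset.card_range]
  intro i hi j hj hij
  simp only [Finset.mem_coe, Finset.mem_range] at hi hj
  have := my_cast_nat_inj hn (by omega) (by omega) (by omega) (by omega) hij
  omega

lemma my_card_le {n : ℕ} (hn : 1 ≤ n) (S : Finset (ZMod n)) : S.card ≤ n := by
  haveI : NeZero n := ⟨by omega⟩
  have h2 : (Finset.univ : Finset (ZMod n)).card = n := by
    simp [Finset.card_univ, ZMod.card]
  simpa [h2] using Finset.card_le_univ S

lemma my_disc_bddAbove {n : ℕ} (hn : 1 ≤ n) (σZ : Equiv.Perm (ZMod n)) :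
    BddAbove {d : ℝ | ∃ I J : Finset (ZMod n),
      IsInterval I ∧ IsInterval J ∧ d = discIn (I.image σZ) J} := by
  refine ⟨n, ?_⟩
  rintro d ⟨I, J, _, _, rfl⟩
  have h1 : ((((I.image σZ) ∩ J).card : ℕ) : ℝ) ≤ n := by
    exact_mod_cast my_card_le hn _
  have h2 : (((I.image σZ).card : ℕ) : ℝ) ≤ n := by exact_mod_cast my_card_le hn _
  have h3 : ((J.card : ℕ) : ℝ) ≤ n := by exact_mod_cast my_card_le hn _
  have h4 : (0:ℝ) ≤ ((((I.image σZ) ∩ J).card : ℕ) : ℝ) := by positivity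
  have h5 : (0:ℝ) ≤ (((I.image σZ).card : ℕ) : ℝ) := by positivity
  have h6 : (0:ℝ) ≤ ((J.card : ℕ) : ℝ) := by positivity
  have hn' : (1:ℝ) ≤ n := by exact_mod_cast hn
  rw [discIn, abs_le]
  have hq : (0:ℝ) ≤ (((I.image σZ).card : ℕ) : ℝ) * ((J.card : ℕ) : ℝ) / n :=
    div_nonneg (mul_nonneg h5 h6) (by linarith)
  have hq2 : (((I.image σZ).card : ℕ) : ℝ) * ((J.card : ℕ) : ℝ) / n ≤ n := by
    rw [div_le_iff₀ (by linarith)]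
    nlinarith
  constructor <;> linarith

lemma my_disc_nonneg {n : ℕ} (hn : 1 ≤ n) (σZ : Equiv.Perm (ZMod n)) : 0 ≤ disc σZ := by
  apply le_csSup (my_disc_bddAbove hn σZ)
  exact ⟨∅, ∅, ⟨0, 0, by simp⟩, ⟨0, 0, by simp⟩, by simp [discIn]⟩

lemma my_disc_ge {n : ℕ} (hn : 1 ≤ n) (σZ : Equiv.Perm (ZMod n)) :
    1 - 1/(n:ℝ) ≤ disc σZ := by
  haveI : NeZero n := ⟨by omega⟩
  apply le_csSup (my_disc_bddAbove hn σZ)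
  refine ⟨{(0 : ZMod n)}, {σZ 0}, ⟨0, 1, by simp⟩, ⟨(σZ 0).val, 1, ?_⟩, ?_⟩
  · simp [ZMod.natCast_val, ZMod.cast_id]
  · have hn' : (1:ℝ) ≤ (n:ℝ) := by exact_mod_cast hn
    have h0 : (0:ℝ) < n := by linarith
    simp only [discIn, Finset.image_singleton, Finset.inter_self, Finset.card_singleton,
      Nat.cast_one, one_mul]
    rw [abs_of_nonneg (by rw [sub_nonneg, div_le_one h0]; linarith)]

lemma my_count_eq {n : ℕ} (hn : 1 ≤ n) (σ : Equiv.Perm (Fin n)) (σZ : Equiv.Perm (ZMod n))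
    (hσ : ∀ k : Fin n, σZ (((k : ℕ) + 1 : ℕ) : ZMod n) = (((σ k : ℕ) + 1 : ℕ) : ZMod n))
    {a s c m : ℕ} (has : a + s ≤ n) (hcm : c + m ≤ n) :
    (((ivl n (a+1) s).image σZ) ∩ (ivl n (c+1) m)).card =
      (Finset.univ.filter (fun k : Fin n =>
        (a + 1 ≤ (k:ℕ)+1 ∧ (k:ℕ)+1 ≤ a + s) ∧
        (c + 1 ≤ (σ k:ℕ)+1 ∧ (σ k:ℕ)+1 ≤ c + m))).card := by
  have himg : ((ivl n (a+1) s).image σZ) ∩ (ivl n (c+1) m) =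
      ((ivl n (a+1) s).filter (fun z => σZ z ∈ ivl n (c+1) m)).image σZ := by
    ext z
    simp only [Finset.mem_inter, Finset.mem_image, Finset.mem_filter]
    constructor
    · rintro ⟨⟨x, hx, rfl⟩, hz⟩
      exact ⟨x, ⟨hx, hz⟩, rfl⟩
    · rintro ⟨x, ⟨hx, hPx⟩, rfl⟩
      exact ⟨⟨x, hx, rfl⟩, hPx⟩
  rw [himg, Finset.card_image_of_injective _ σZ.injective]
  symm
  apply Finset.card_bij (fun (k : Fin n) _ => (((k:ℕ)+1 : ℕ) : ZMod n))
  · rintro k hk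
    simp only [Finset.mem_filter, Finset.mem_univ, true_and] at hk
    obtain ⟨⟨h1, h2⟩, ⟨h3, h4⟩⟩ := hk
    rw [Finset.mem_filter]
    refine ⟨(my_mem_ivl hn has (by omega) (by have := k.isLt; omega)).mpr ⟨h1, h2⟩, ?_⟩
    rw [hσ k]
    exact (my_mem_ivl hn hcm (by omega) (by have := (σ k).isLt; omega)).mpr ⟨h3, h4⟩
  · rintro k hk k' hk' hkk
    have hkn : (k:ℕ) < n := k.isLt
    have hkn' : (k':ℕ) < n := k'.isLt
    have := my_cast_nat_inj hn (by omega) (by omega) (by omega) (by omega) hkk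
    exact Fin.ext (by omega)
  · rintro z hz
    rw [Finset.mem_filter] at hz
    obtain ⟨hzI, hzJ⟩ := hz
    simp only [ivl, Finset.mem_image, Finset.mem_range] at hzI
    obtain ⟨i0, hi0, rfl⟩ := hzI
    refine ⟨⟨a + i0, by omega⟩, ?_, by simp only [Fin.val_mk]; exact congrArg _ (by omega)⟩
    rw [Finset.mem_filter]
    refine ⟨Finset.mem_univ _, ⟨⟨by simp only [Fin.val_mk]; omega, by simp only [Fin.val_mk]; omega⟩, ?_⟩⟩
    have hz2 : σZ (((a + i0 : ℕ) + 1 : ℕ) : ZMod n) ∈ ivl n (c+1) m := by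
      have : ((a + 1 + i0 : ℕ) : ZMod n) = (((a + i0 : ℕ) + 1 : ℕ) : ZMod n) := by congr 1; omega
      rwa [this] at hzJ
    rw [hσ ⟨a + i0, by omega⟩] at hz2
    have hb := (my_mem_ivl hn hcm (by omega) (by
      have := (σ ⟨a + i0, by omega⟩).isLt; omega)).mp hz2
    exact ⟨hb.1, hb.2⟩

lemma my_count_bound {n : ℕ} (hn : 1 ≤ n) (σ : Equiv.Perm (Fin n)) (σZ : Equiv.Perm (ZMod n))
    (hσ : ∀ k : Fin n, σZ (((k : ℕ) + 1 : ℕ) : ZMod n) = (((σ k : ℕ) + 1 : ℕ) : ZMod n))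
    {a s c m : ℕ} (has : a + s ≤ n) (hcm : c + m ≤ n) :
    |(((Finset.univ.filter (fun k : Fin n =>
        (a + 1 ≤ (k:ℕ)+1 ∧ (k:ℕ)+1 ≤ a + s) ∧
        (c + 1 ≤ (σ k:ℕ)+1 ∧ (σ k:ℕ)+1 ≤ c + m))).card : ℕ) : ℝ)
      - (s:ℝ) * (m:ℝ) / (n:ℝ)| ≤ disc σZ := by
  have hel : discIn ((ivl n (a+1) s).image σZ) (ivl n (c+1) m) =
      |(((Finset.univ.filter (fun k : Fin n =>
        (a + 1 ≤ (k:ℕ)+1 ∧ (k:ℕ)+1 ≤ a + s) ∧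
        (c + 1 ≤ (σ k:ℕ)+1 ∧ (σ k:ℕ)+1 ≤ c + m))).card : ℕ) : ℝ)
      - (s:ℝ) * (m:ℝ) / (n:ℝ)| := by
    rw [discIn, my_count_eq hn σ σZ hσ has hcm,
      Finset.card_image_of_injective _ σZ.injective, my_card_ivl hn has, my_card_ivl hn hcm]
  rw [← hel]
  exact le_csSup (my_disc_bddAbove hn σZ)
    ⟨ivl n (a+1) s, ivl n (c+1) m, my_ivl_isInterval _ _, my_ivl_isInterval _ _, rfl⟩

lemma my_B_bound {n : ℕ} (hn : 1 ≤ n) (σ : Equiv.Perm (Fin n)) (σZ : Equiv.Perm (ZMod n))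
    (hσ : ∀ k : Fin n, σZ (((k : ℕ) + 1 : ℕ) : ZMod n) = (((σ k : ℕ) + 1 : ℕ) : ZMod n))
    (k : Fin n) :
    |((Bperm n σ k : ℕ) : ℝ) - (((k:ℕ):ℝ)+1) * (((σ k:ℕ):ℝ)+1) / (n:ℝ)| ≤ disc σZ := by
  have h := my_count_bound hn σ σZ hσ (a := 0) (s := (k:ℕ)+1) (c := 0) (m := (σ k:ℕ)+1)
    (by have := k.isLt; omega) (by have := (σ k).isLt; omega)
  have hfilter : (Finset.univ.filter (fun q : Fin n =>
        (0 + 1 ≤ (q:ℕ)+1 ∧ (q:ℕ)+1 ≤ 0 + ((k:ℕ)+1)) ∧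
        (0 + 1 ≤ (σ q:ℕ)+1 ∧ (σ q:ℕ)+1 ≤ 0 + ((σ k:ℕ)+1)))) =
      (Finset.univ.filter (fun q : Fin n => q ≤ k ∧ σ q ≤ σ k)) := by
    apply Finset.filter_congr
    intro q _
    simp only [Fin.le_def]
    constructor
    · rintro ⟨⟨_, h2⟩, ⟨_, h4⟩⟩; exact ⟨by omega, by omega⟩
    · rintro ⟨h2, h4⟩; exact ⟨⟨by omega, by omega⟩, ⟨by omega, by omega⟩⟩
  rw [hfilter] at h
  rw [Bperm]
  convert h using 3 <;> push_cast <;> ring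

lemma my_aux1 (x : ℝ) (h1 : 1 ≤ x) (h2 : 32*x ≤ x^2) : 32 ≤ x := by nlinarith
lemma my_aux2 (n D : ℝ) (hn : 1 ≤ n) (h : 32*(n*D) ≤ (n-1)^2) : 32*D ≤ n := by nlinarith
lemma my_aux3 (L : ℝ) (h0 : 0 ≤ L) (h : 1024 ≤ L^2) : 32 ≤ L := by nlinarith
lemma my_aux4 (a b : ℝ) (ha : 0 ≤ a) (hb : 0 ≤ b) (h : a^2 ≤ b^2) : a ≤ b := by nlinarith

set_option maxHeartbeats 2000000 in
theorem stmt_18 (n : ℕ) (hn : 1 ≤ n) (σ : Equiv.Perm (Fin n))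
    (σZ : Equiv.Perm (ZMod n))
    (hσ : ∀ k : Fin n, σZ (((k : ℕ) + 1 : ℕ) : ZMod n) = (((σ k : ℕ) + 1 : ℕ) : ZMod n))
    (u : ℝ) (hu : 1 ≤ u)
    (huv : u + Real.sqrt (32 * (n : ℝ) * disc σZ) ≤ (n : ℝ)) :
    ∃ k : Fin n, (Bperm n σ k : ℝ) ∈ Set.Icc u (u + Real.sqrt (32 * (n : ℝ) * disc σZ)) := by
  obtain ⟨D, hDdef⟩ : ∃ D : ℝ, D = disc σZ := ⟨_, rfl⟩
  obtain ⟨L, hLdef⟩ : ∃ L : ℝ, L = Real.sqrt (32 * (n : ℝ) * disc σZ) := ⟨_, rfl⟩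
  have hD0 : 0 ≤ D := hDdef ▸ my_disc_nonneg hn σZ
  have hL0 : 0 ≤ L := hLdef ▸ Real.sqrt_nonneg _
  have hL2 : L^2 = 32 * (n:ℝ) * D := by
    rw [hLdef, hDdef]
    exact Real.sq_sqrt (mul_nonneg (by positivity) (my_disc_nonneg hn σZ))
  rw [← hLdef] at huv ⊢
  rcases eq_or_lt_of_le hn with h1 | hn2
  · -- n = 1
    have hB : Bperm n σ ⟨0, by omega⟩ = 1 := by
      rw [Bperm, Finset.filter_true_of_mem, Finset.card_univ]
      · simp [Fintype.card_fin, ← h1]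
      · intro q _
        have hq : (q : ℕ) = 0 := by have := q.isLt; omega
        have hk : q = ⟨0, by omega⟩ := Fin.ext hq
        exact ⟨le_of_eq hk, le_of_eq (by rw [hk])⟩
    refine ⟨⟨0, by omega⟩, ?_, ?_⟩ <;> rw [hB]
    · have : (n:ℝ) = 1 := by exact_mod_cast h1.symm
      push_cast; linarith
    · push_cast; linarith
  · -- n ≥ 2
    have hnR : (2:ℝ) ≤ n := by exact_mod_cast hn2
    have hnpos : (0:ℝ) < n := by linarith
    have hn0 : (0:ℝ) ≤ n := by linarith
    have hge : 1 - 1/(n:ℝ) ≤ D := hDdef ▸ my_disc_ge hn σZ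
    have hnD : (n:ℝ) - 1 ≤ n * D := by
      have he : (n:ℝ) * (1 - 1/n) = n - 1 := by field_simp
      have := mul_le_mul_of_nonneg_left hge hn0
      linarith
    have hLn : L ≤ (n:ℝ) - 1 := by linarith
    have h32nD : 32 * ((n:ℝ)*D) ≤ ((n:ℝ)-1)^2 := by
      have := pow_le_pow_left₀ hL0 hLn 2
      linarith
    have hn33 : (33:ℝ) ≤ n := by
      have := my_aux1 ((n:ℝ)-1) (by linarith) (by nlinarith)
      linarith
    have h32 : (32:ℝ) ≤ n * D := by linarith
    have hDn : 32 * D ≤ (n:ℝ) := my_aux2 _ _ (by linarith) h32nD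
    have hL32 : (32:ℝ) ≤ L := my_aux3 _ hL0 (by linarith)
    have hDL : 32 * D ≤ L := by
      apply my_aux4 _ _ (by positivity) hL0
      have h := mul_le_mul_of_nonneg_left hDn (by positivity : (0:ℝ) ≤ 32*D)
      calc (32*D)^2 = (32*D)*(32*D) := sq (32*D)
        _ ≤ (32*D)*n := h
        _ = 32*n*D := by ring
        _ = L^2 := hL2.symm
    obtain ⟨v, hvdef⟩ : ∃ v : ℝ, v = u + L/2 := ⟨_, rfl⟩
    obtain ⟨δ, hδdef⟩ : ∃ δ : ℝ, δ = L/2 - D := ⟨_, rfl⟩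
    have hδL : 15*L/32 ≤ δ := by rw [hδdef]; linarith
    have hδ15 : (15:ℝ) ≤ δ := by linarith
    have hδ0 : (0:ℝ) ≤ δ := by linarith
    have hv1 : 1 ≤ v - δ := by rw [hvdef, hδdef]; linarith
    have hvn : v + δ ≤ (n:ℝ) := by rw [hvdef, hδdef]; linarith
    have hv0 : (1:ℝ) ≤ v := by linarith
    have hvu1 : v - δ - D = u := by rw [hvdef, hδdef]; ring
    have hvu2 : v + δ + D = u + L := by rw [hvdef, hδdef]; ring
    by_contra hcon
    push_neg at hcon
    have hband : ∀ k : Fin n,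
        ¬ ((v - δ) * n ≤ (((k:ℕ):ℝ)+1) * (((σ k:ℕ):ℝ)+1) ∧
           (((k:ℕ):ℝ)+1) * (((σ k:ℕ):ℝ)+1) ≤ (v + δ) * n) := by
      rintro k ⟨hb1, hb2⟩
      have hB := my_B_bound hn σ σZ hσ k
      rw [← hDdef, abs_le] at hB
      have hq1 : v - δ ≤ (((k:ℕ):ℝ)+1) * (((σ k:ℕ):ℝ)+1) / n := by
        rw [le_div_iff₀ hnpos]; linarith
      have hq2 : (((k:ℕ):ℝ)+1) * (((σ k:ℕ):ℝ)+1) / n ≤ v + δ := by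
        rw [div_le_iff₀ hnpos]; linarith
      have hmem := hcon k
      rw [Set.mem_Icc] at hmem
      push_neg at hmem
      have hl : u ≤ ((Bperm n σ k : ℕ):ℝ) := by
        have := hB.1; linarith
      have hgt := hmem hl
      have hr : ((Bperm n σ k : ℕ):ℝ) ≤ u + L := by
        have := hB.2; linarith
      linarith
    -- build the strip
    obtain ⟨x₁, hx1def⟩ : ∃ x : ℕ, x = ⌈v⌉₊ := ⟨_, rfl⟩
    have hx₁v : v ≤ (x₁:ℝ) := hx1def ▸ Nat.le_ceil v
    have hx₁v' : (x₁:ℝ) ≤ v + 1 := hx1def ▸ le_of_lt (Nat.ceil_lt_add_one (by linarith))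
    have hx₁pos : (0:ℝ) < x₁ := by linarith
    have hx₁0 : (0:ℝ) ≤ x₁ := by linarith
    obtain ⟨s, hsdef⟩ : ∃ s : ℕ, s = ⌊δ⌋₊ - 1 := ⟨_, rfl⟩
    have hfloor4 : 4 ≤ ⌊δ⌋₊ := Nat.le_floor (by norm_num; linarith)
    have hsR : (s:ℝ) = (⌊δ⌋₊:ℝ) - 1 := by
      rw [hsdef]; push_cast [Nat.cast_sub (by omega : 1 ≤ ⌊δ⌋₊)]; ring
    have hsl : δ - 2 ≤ (s:ℝ) := by
      rw [hsR]; have := Nat.lt_floor_add_one δ; linarith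
    have hsu : (s:ℝ) ≤ δ - 1 := by
      rw [hsR]; have := Nat.floor_le hδ0; linarith
    have hs0 : (0:ℝ) ≤ (s:ℝ) := by linarith
    obtain ⟨x₂, hx2def⟩ : ∃ x : ℕ, x = x₁ + s := ⟨_, rfl⟩
    have hx₂R : (x₂:ℝ) = (x₁:ℝ) + s := by rw [hx2def]; push_cast; ring
    have hx₂le : (x₂:ℝ) ≤ v + δ := by rw [hx₂R]; linarith
    have hx₂n : (x₂:ℝ) ≤ n := by linarith
    have hx₂pos : (0:ℝ) < x₂ := by linarith
    have hx₂0 : (0:ℝ) ≤ x₂ := by linarith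
    obtain ⟨A, hAdef⟩ : ∃ A : ℝ, A = (v - δ) * n / x₁ := ⟨_, rfl⟩
    obtain ⟨B, hBdef⟩ : ∃ B : ℝ, B = (v + δ) * n / x₂ := ⟨_, rfl⟩
    have e1 : A * (x₁:ℝ) = (v - δ) * n := by
      rw [hAdef]; exact div_mul_cancel₀ _ (ne_of_gt hx₁pos)
    have e2 : B * (x₂:ℝ) = (v + δ) * n := by
      rw [hBdef]; exact div_mul_cancel₀ _ (ne_of_gt hx₂pos)
    have hA1 : 1 ≤ A := by
      rw [hAdef, le_div_iff₀ hx₁pos]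
      have h := mul_le_mul_of_nonneg_right hv1 hn0
      linarith
    have hA0 : 0 ≤ A := by linarith
    have hB0 : 0 ≤ B := by
      rw [hBdef]; positivity
    have hδn : δ ≤ (n:ℝ) := by linarith
    have hAn : A ≤ (n:ℝ) - δ := by
      rw [hAdef, div_le_iff₀ hx₁pos]
      have h1 : ((n:ℝ) - δ) * v ≤ ((n:ℝ) - δ) * x₁ :=
        mul_le_mul_of_nonneg_left hx₁v (by linarith)
      have h2 : 0 ≤ δ * ((n:ℝ) - v) := mul_nonneg hδ0 (by linarith)
      linarith
    have hBA : δ/2 ≤ B - A := by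
      have key : (δ/2) * ((x₁:ℝ) * (x₂:ℝ)) ≤ (B - A) * ((x₁:ℝ) * (x₂:ℝ)) := by
        have expand : (B - A) * ((x₁:ℝ) * (x₂:ℝ)) = (B * x₂) * x₁ - (A * x₁) * x₂ := by ring
        rw [expand, e1, e2]
        have hnum : (v + δ) * (n:ℝ) * x₁ - (v - δ) * n * x₂ = (n:ℝ) * (2*δ*(x₁:ℝ) - (v - δ)*s) := by
          rw [hx₂R]; ring
        rw [hnum]
        have h1 : (v - δ)*(s:ℝ) ≤ v * δ :=
          mul_le_mul (by linarith) (by linarith) hs0 (by linarith)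
        have h2a : 2*δ*v ≤ 2*δ*(x₁:ℝ) := by
          have := mul_le_mul_of_nonneg_left hx₁v (by positivity : (0:ℝ) ≤ 2*δ)
          linarith
        have h2 : δ * v ≤ 2*δ*(x₁:ℝ) - (v - δ)*s := by linarith
        have h3a : (x₁:ℝ) * x₂ ≤ (2*v) * n :=
          mul_le_mul (by linarith) hx₂n hx₂0 (by linarith)
        have h3 : (δ/2) * ((x₁:ℝ) * (x₂:ℝ)) ≤ δ * v * n := by
          have := mul_le_mul_of_nonneg_left h3a (by positivity : (0:ℝ) ≤ δ/2)
          linarith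
        have h4 := mul_le_mul_of_nonneg_left h2 hn0
        linarith
      have hpos : (0:ℝ) < (x₁:ℝ) * x₂ := by positivity
      exact le_of_mul_le_mul_right (by linarith [key]) hpos
    obtain ⟨c, hcdef⟩ : ∃ c : ℕ, c = ⌈A⌉₊ - 1 := ⟨_, rfl⟩
    have hceil1 : 1 ≤ ⌈A⌉₊ := by rw [Nat.one_le_ceil_iff]; linarith
    have hcR : (c:ℝ) = (⌈A⌉₊:ℝ) - 1 := by
      rw [hcdef]; push_cast [Nat.cast_sub hceil1]; ring
    have hcub : (c:ℝ) ≤ A := by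
      rw [hcR]; have := Nat.ceil_lt_add_one (le_trans (by norm_num) hA1); linarith
    have hclb : A ≤ (c:ℝ) + 1 := by
      rw [hcR]; have := Nat.le_ceil A; linarith
    have hc0 : (0:ℝ) ≤ (c:ℝ) := by positivity
    obtain ⟨t, htdef⟩ : ∃ t : ℕ, t = min ⌊B⌋₊ n := ⟨_, rfl⟩
    have htn : t ≤ n := htdef ▸ min_le_right _ _
    have htB : (t:ℝ) ≤ B := by
      have h1 : (⌊B⌋₊:ℝ) ≤ B := Nat.floor_le hB0
      have h2 : t ≤ ⌊B⌋₊ := htdef ▸ min_le_left _ _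
      have h3 : (t:ℝ) ≤ (⌊B⌋₊:ℝ) := by exact_mod_cast h2
      linarith
    have htlb : min B (n:ℝ) - 1 ≤ (t:ℝ) := by
      rcases le_total (⌊B⌋₊) n with h | h
      · have ht : t = ⌊B⌋₊ := htdef ▸ min_eq_left h
        have hfl := Nat.lt_floor_add_one B
        have hmin : min B (n:ℝ) ≤ B := min_le_left _ _
        rw [ht]; linarith
      · have ht : t = n := htdef ▸ min_eq_right h
        have hmin : min B (n:ℝ) ≤ n := min_le_right _ _
        rw [ht]; linarith
    have hminBA : A + δ/2 ≤ min B (n:ℝ) := le_min (by linarith) (by linarith)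
    have hct : c ≤ t := by
      have h : (c:ℝ) ≤ (t:ℝ) := by linarith
      exact_mod_cast h
    obtain ⟨m, hmdef⟩ : ∃ m : ℕ, m = t - c := ⟨_, rfl⟩
    have hmR : (m:ℝ) = (t:ℝ) - (c:ℝ) := by
      rw [hmdef]; push_cast [Nat.cast_sub hct]; ring
    have hmlb : δ/2 - 1 ≤ (m:ℝ) := by rw [hmR]; linarith
    have hcmt : c + m = t := by omega
    have hasn : x₁ + s ≤ n := by
      have h : ((x₁ + s : ℕ):ℝ) ≤ (n:ℝ) := by push_cast; linarith
      exact_mod_cast h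
    have hcmn : c + m ≤ n := by omega
    have hzero : (Finset.univ.filter (fun k : Fin n =>
        (x₁ + 1 ≤ (k:ℕ)+1 ∧ (k:ℕ)+1 ≤ x₁ + s) ∧
        (c + 1 ≤ (σ k:ℕ)+1 ∧ (σ k:ℕ)+1 ≤ c + m))) = ∅ := by
      rw [Finset.filter_eq_empty_iff]
      rintro k _ ⟨⟨h1, h2⟩, ⟨h3, h4⟩⟩
      apply hband k
      have hp1 : (x₁:ℝ) + 1 ≤ ((k:ℕ):ℝ) + 1 := by exact_mod_cast Nat.cast_le.mpr h1
      have hp2 : ((k:ℕ):ℝ) + 1 ≤ (x₂:ℝ) := by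
        have hh : ((k:ℕ)+1 : ℕ) ≤ x₂ := by omega
        exact_mod_cast hh
      have hq3 : (c:ℝ) + 1 ≤ ((σ k:ℕ):ℝ) + 1 := by exact_mod_cast Nat.cast_le.mpr h3
      have hq4 : ((σ k:ℕ):ℝ) + 1 ≤ (t:ℝ) := by
        have hh : ((σ k:ℕ)+1 : ℕ) ≤ t := by omega
        exact_mod_cast hh
      have hq0 : (0:ℝ) ≤ ((σ k:ℕ):ℝ) + 1 := by positivity
      constructor
      · have hAq : A ≤ ((σ k:ℕ):ℝ) + 1 := by linarith
        have hmul : A * (x₁:ℝ) ≤ (((σ k:ℕ):ℝ)+1) * (((k:ℕ):ℝ)+1) :=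
          mul_le_mul hAq (by linarith) hx₁0 hq0
        calc (v - δ) * (n:ℝ) = A * x₁ := e1.symm
          _ ≤ (((σ k:ℕ):ℝ)+1) * (((k:ℕ):ℝ)+1) := hmul
          _ = (((k:ℕ):ℝ)+1) * (((σ k:ℕ):ℝ)+1) := by ring
      · have hqB : ((σ k:ℕ):ℝ) + 1 ≤ B := by linarith
        have hmul : (((k:ℕ):ℝ)+1) * (((σ k:ℕ):ℝ)+1) ≤ (x₂:ℝ) * B :=
          mul_le_mul hp2 hqB hq0 hx₂0
        calc (((k:ℕ):ℝ)+1) * (((σ k:ℕ):ℝ)+1) ≤ (x₂:ℝ) * B := hmul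
          _ = B * x₂ := by ring
          _ = (v + δ) * n := e2
    have hcount := my_count_bound hn σ σZ hσ (a := x₁) (s := s) (c := c) (m := m) hasn hcmn
    rw [← hDdef, hzero] at hcount
    simp only [Finset.card_empty, Nat.cast_zero, zero_sub, abs_neg] at hcount
    rw [abs_of_nonneg (by positivity)] at hcount
    have hsm : (s:ℝ) * m ≤ D * n := by
      rw [div_le_iff₀ hnpos] at hcount; linarith
    have hA' : 13*L/32 ≤ (s:ℝ) := by linarith
    have hB' : 13*L/64 ≤ (m:ℝ) := by linarith
    have hprod : (13*L/32) * (13*L/64) ≤ (s:ℝ) * m :=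
      mul_le_mul hA' hB' (by linarith) (by linarith)
    have hqq : (13*L/32) * (13*L/64) = (169/2048) * L^2 := by ring
    rw [hqq, hL2] at hprod
    linarith
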